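/- Let n ≥ 2 be an integer, a ∈ (0,1], and λ ≥ n!. Define m(z) = e^{−1/z} z^{−(n+2)} − λ e^{−z}. Then for every b > 0, the polynomial P(b) = ∫_a^∞ z(z+b)^{n−1} m(z) dz satisfies P(b) < 0. -/

import Mathlib

open MeasureTheory Set Real

lemma aux_int (k : ℕ) : IntegrableOn (fun x : ℝ => x ^ k * Real.exp (-x)) (Set.Ioi 0) := by
  have h := Real.GammaIntegral_convergent (s := (k + 1 : ℝ)) (by positivity)
  refine h.congr_fun (fun x hx => ?_) measurableSet_Ioi
  beta_reduce
  rw [add_sub_cancel_right, Real.rpow_natCast, mul_comm]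

lemma aux_val (k : ℕ) : ∫ x in Set.Ioi 0, x ^ k * Real.exp (-x) = k.factorial := by
  rw [← Real.Gamma_nat_eq_factorial, Real.Gamma_eq_integral (by positivity)]
  refine setIntegral_congr_fun measurableSet_Ioi (fun x hx => ?_)
  rw [add_sub_cancel_right, Real.rpow_natCast, mul_comm]

lemma aux_Ioi1 : ∫ x in Set.Ioi (1:ℝ), x * Real.exp (-x) = 2 * Real.exp (-1) := by
  have h := integral_Ioi_of_hasDerivAt_of_tendsto (f := fun x : ℝ => -((x + 1) * Real.exp (-x)))
    (f' := fun x : ℝ => x * Real.exp (-x)) (a := 1) (m := 0) ?_ ?_ ?_ ?_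
  · rw [h]; norm_num
  · exact (Continuous.continuousWithinAt (by continuity))
  · intro x hx
    have h1 : HasDerivAt (fun x : ℝ => Real.exp (-x)) (-Real.exp (-x)) x := by
      simpa [Function.comp_def] using (Real.hasDerivAt_exp (-x)).comp x (hasDerivAt_neg x)
    have h2 : HasDerivAt (fun x : ℝ => (x + 1) * Real.exp (-x))
        (1 * Real.exp (-x) + (x + 1) * -Real.exp (-x)) x :=
      ((hasDerivAt_id x).add_const 1).mul h1
    convert h2.neg using 1
    · ext y; simp only [Pi.neg_apply]
    · ring
  · exact (aux_int 1).mono_set (Set.Ioi_subset_Ioi zero_le_one) |>.congr_fun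
      (fun x hx => by simp only [pow_one]) measurableSet_Ioi
  · have := Real.tendsto_pow_mul_exp_neg_atTop_nhds_zero 1
    have h0 := Real.tendsto_exp_neg_atTop_nhds_zero
    have h1 : Filter.Tendsto (fun x : ℝ => x * Real.exp (-x) + Real.exp (-x)) Filter.atTop
        (nhds (0 + 0)) := by
      have h3 : Filter.Tendsto (fun x : ℝ => x * Real.exp (-x)) Filter.atTop (nhds 0) := by
        simpa using Real.tendsto_pow_mul_exp_neg_atTop_nhds_zero 1
      exact h3.add h0
    have h2 := h1.neg
    simp only [neg_add, add_zero, neg_zero] at h2 ⊢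
    refine h2.congr (fun x => by ring)

theorem stmt_18 (n : ℕ) (hn : 2 ≤ n) (a : ℝ) (ha : 0 < a) (ha1 : a ≤ 1)
    (lam : ℝ) (hlam : (n.factorial : ℝ) ≤ lam) (b : ℝ) (hb : 0 < b) :
    (∫ z in Set.Ioi a,
        z * (z + b) ^ (n - 1) *
          (Real.exp (-1 / z) * z ^ (-(n + 2 : ℤ)) - lam * Real.exp (-z))) < 0 := by
  obtain ⟨m, rfl⟩ : ∃ m, n = m + 2 := ⟨n - 2, by omega⟩
  set f1 : ℝ → ℝ := fun z => z * (z + b) ^ (m + 1) *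
    (Real.exp (-1 / z) * z ^ (-((m + 2 : ℕ) + 2 : ℤ))) with hf1
  set f2 : ℝ → ℝ := fun z => z * (z + b) ^ (m + 1) * Real.exp (-z) with hf2
  set g : ℝ → ℝ := fun u => (1 + b * u) ^ (m + 1) * Real.exp (-u) with hg
  -- the substitution identity pointwise
  have hkey : Set.EqOn (fun x : ℝ => (|(-1 : ℝ)| * x ^ ((-1 : ℝ) - 1)) • g (x ^ (-1 : ℝ)))
      f1 (Set.Ioi 0) := by
    intro x hx
    have hx0 : (0 : ℝ) < x := hx
    have hxne : x ≠ 0 := ne_of_gt hx0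
    simp only [smul_eq_mul, hg, hf1]
    have e1 : x ^ ((-1 : ℝ) - 1) = (x ^ (2 : ℕ))⁻¹ := by
      rw [show ((-1 : ℝ) - 1) = ((-2 : ℤ) : ℝ) by norm_num, Real.rpow_intCast, zpow_neg,
        zpow_ofNat]
    have e2 : x ^ (-1 : ℝ) = x⁻¹ := by
      rw [show ((-1 : ℝ)) = ((-1 : ℤ) : ℝ) by norm_num, Real.rpow_intCast, zpow_neg, zpow_one]
    have e3 : x ^ (-(((m + 2 : ℕ) : ℤ) + 2)) = (x ^ (m + 4 : ℕ))⁻¹ := by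
      rw [show (-(((m + 2 : ℕ) : ℤ) + 2)) = -((m + 4 : ℕ) : ℤ) by push_cast; ring, zpow_neg,
        zpow_natCast]
    rw [abs_neg, abs_one, one_mul, e1, e2, e3,
      show (1 + b * x⁻¹) = (x + b) * x⁻¹ by field_simp, mul_pow, inv_pow,
      show (-1 / x) = -x⁻¹ by rw [neg_div, one_div]]
    field_simp
    ring
  -- g as a finite sum
  have hgsum : ∀ u : ℝ, g u = ∑ k ∈ Finset.range (m + 2),
      (((m + 1).choose k : ℝ) * b ^ k) * (u ^ k * Real.exp (-u)) := by
    intro u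
    simp only [hg]
    rw [show (1 + b * u) = (b * u + 1) by ring, add_pow, Finset.sum_mul]
    exact Finset.sum_congr rfl fun k _ => by ring
  have hgint : IntegrableOn g (Set.Ioi 0) := by
    have hs : IntegrableOn (fun u : ℝ => ∑ k ∈ Finset.range (m + 2),
        (((m + 1).choose k : ℝ) * b ^ k) * (u ^ k * Real.exp (-u))) (Set.Ioi 0) :=
      integrable_finset_sum _ fun k _ => ((aux_int k).const_mul _)
    exact hs.congr (Filter.Eventually.of_forall fun u => (hgsum u).symm)
  have hgval : ∫ u in Set.Ioi 0, g u ≤ ((m + 1).factorial : ℝ) * (1 + b) ^ (m + 1) := by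
    have h1 : ∫ u in Set.Ioi 0, g u = ∑ k ∈ Finset.range (m + 2),
        (((m + 1).choose k : ℝ) * b ^ k) * (k.factorial : ℝ) := by
      rw [show g = fun u => ∑ k ∈ Finset.range (m + 2),
        (((m + 1).choose k : ℝ) * b ^ k) * (u ^ k * Real.exp (-u)) from funext hgsum,
        integral_finset_sum _ fun k _ => ((aux_int k).const_mul _)]
      exact Finset.sum_congr rfl fun k _ => by rw [MeasureTheory.integral_const_mul, aux_val]
    have hpow : (1 + b) ^ (m + 1) = ∑ k ∈ Finset.range (m + 2), ((m + 1).choose k : ℝ) * b ^ k := by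
      rw [show (1 + b) = (b + 1) by ring, add_pow]
      exact Finset.sum_congr rfl fun k _ => by rw [one_pow]; ring
    rw [h1, hpow, Finset.mul_sum]
    refine Finset.sum_le_sum fun k hk => ?_
    have hk' : k ≤ m + 1 := Nat.le_of_lt_succ (Finset.mem_range.mp hk)
    have : (k.factorial : ℝ) ≤ ((m + 1).factorial : ℝ) := by
      exact_mod_cast Nat.factorial_le hk'
    have hcb : (0 : ℝ) ≤ ((m + 1).choose k : ℝ) * b ^ k := by positivity
    nlinarith [hcb]
  -- substitution
  have hsub : ∫ x in Set.Ioi 0, f1 x = ∫ u in Set.Ioi 0, g u := by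
    rw [← MeasureTheory.integral_comp_rpow_Ioi g (p := -1) (by norm_num)]
    exact (setIntegral_congr_fun measurableSet_Ioi hkey).symm
  have hf1int : IntegrableOn f1 (Set.Ioi 0) := by
    have h := (MeasureTheory.integrableOn_Ioi_comp_rpow_iff g (p := -1) (by norm_num)).mpr hgint
    exact h.congr_fun hkey measurableSet_Ioi
  have hf1a : IntegrableOn f1 (Set.Ioi a) := hf1int.mono_set (Set.Ioi_subset_Ioi ha.le)
  -- f2 integrability
  have hf2sum : ∀ z : ℝ, f2 z = ∑ k ∈ Finset.range (m + 2),
      (((m + 1).choose k : ℝ) * b ^ (m + 1 - k)) * (z ^ (k + 1) * Real.exp (-z)) := by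
    intro z
    simp only [hf2]
    rw [add_pow, Finset.mul_sum, Finset.sum_mul]
    exact Finset.sum_congr rfl fun k _ => by ring
  have hf2int0 : IntegrableOn f2 (Set.Ioi 0) := by
    have hs : IntegrableOn (fun z : ℝ => ∑ k ∈ Finset.range (m + 2),
        (((m + 1).choose k : ℝ) * b ^ (m + 1 - k)) * (z ^ (k + 1) * Real.exp (-z))) (Set.Ioi 0) :=
      integrable_finset_sum _ fun k _ => ((aux_int (k + 1)).const_mul _)
    exact hs.congr (Filter.Eventually.of_forall fun z => (hf2sum z).symm)
  have hf2a : IntegrableOn f2 (Set.Ioi a) := hf2int0.mono_set (Set.Ioi_subset_Ioi ha.le)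
  -- split
  have hsplit : (∫ z in Set.Ioi a, z * (z + b) ^ (m + 2 - 1) *
      (Real.exp (-1 / z) * z ^ (-((m + 2 : ℕ) + 2 : ℤ)) - lam * Real.exp (-z)))
      = (∫ z in Set.Ioi a, f1 z) - lam * ∫ z in Set.Ioi a, f2 z := by
    rw [← MeasureTheory.integral_const_mul, ← MeasureTheory.integral_sub hf1a (hf2a.const_mul lam)]
    exact setIntegral_congr_fun measurableSet_Ioi fun z _ => by simp only [hf1, hf2, show m + 2 - 1 = m + 1 from rfl]; ring
  rw [hsplit]
  -- upper bound on ∫ f1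
  have hf1nonneg : ∀ᵐ x ∂(volume.restrict (Set.Ioi (0 : ℝ))), 0 ≤ f1 x := by
    filter_upwards [ae_restrict_mem measurableSet_Ioi] with x hx
    have hx0 : (0 : ℝ) < x := hx
    have hxb : (0 : ℝ) < x + b := by linarith
    simp only [hf1]
    positivity
  have hI1le : (∫ z in Set.Ioi a, f1 z) ≤ ((m + 1).factorial : ℝ) * (1 + b) ^ (m + 1) := by
    calc (∫ z in Set.Ioi a, f1 z) ≤ ∫ z in Set.Ioi 0, f1 z :=
          setIntegral_mono_set hf1int hf1nonneg
            (HasSubset.Subset.eventuallyLE (Set.Ioi_subset_Ioi ha.le))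
      _ = ∫ u in Set.Ioi 0, g u := hsub
      _ ≤ _ := hgval
  -- lower bound on ∫ f2
  have hf2nonneg : ∀ᵐ x ∂(volume.restrict (Set.Ioi a)), 0 ≤ f2 x := by
    filter_upwards [ae_restrict_mem measurableSet_Ioi] with x hx
    have hx0 : (0 : ℝ) < x := lt_trans ha hx
    have hxb : (0 : ℝ) < x + b := by linarith
    simp only [hf2]
    positivity
  have hxe : IntegrableOn (fun z : ℝ => z * Real.exp (-z)) (Set.Ioi 1) :=
    ((aux_int 1).mono_set (Set.Ioi_subset_Ioi zero_le_one)).congr_fun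
      (fun z _ => by simp only [pow_one]) measurableSet_Ioi
  have hI2ge : (1 + b) ^ (m + 1) * (2 * Real.exp (-1)) ≤ ∫ z in Set.Ioi a, f2 z := by
    have h1 : (∫ z in Set.Ioi (1 : ℝ), f2 z) ≤ ∫ z in Set.Ioi a, f2 z :=
      setIntegral_mono_set hf2a hf2nonneg
        (HasSubset.Subset.eventuallyLE (Set.Ioi_subset_Ioi ha1))
    have h2 : (1 + b) ^ (m + 1) * (2 * Real.exp (-1)) ≤ ∫ z in Set.Ioi (1 : ℝ), f2 z := by
      calc (1 + b) ^ (m + 1) * (2 * Real.exp (-1))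
          = ∫ z in Set.Ioi (1 : ℝ), (1 + b) ^ (m + 1) * (z * Real.exp (-z)) := by
            rw [MeasureTheory.integral_const_mul, aux_Ioi1]
        _ ≤ ∫ z in Set.Ioi (1 : ℝ), f2 z := by
            refine setIntegral_mono_on (hxe.const_mul _)
              (hf2int0.mono_set (Set.Ioi_subset_Ioi zero_le_one)) measurableSet_Ioi
              fun z hz => ?_
            have hz1 : (1 : ℝ) < z := hz
            have hpow : (1 + b) ^ (m + 1) ≤ (z + b) ^ (m + 1) :=
              pow_le_pow_left₀ (by linarith) (by linarith) _
            calc (1 + b) ^ (m + 1) * (z * Real.exp (-z))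
                ≤ (z + b) ^ (m + 1) * (z * Real.exp (-z)) :=
                  mul_le_mul_of_nonneg_right hpow (by positivity)
              _ = f2 z := by simp only [hf2]; ring
    linarith
  -- final numeric comparison
  have hfact : ((m + 2).factorial : ℝ) ≤ lam := by exact_mod_cast hlam
  have hfpos : (0 : ℝ) < ((m + 1).factorial : ℝ) := by positivity
  have hlampos : (0 : ℝ) < lam := lt_of_lt_of_le (by positivity) hfact
  have hE : (0 : ℝ) < Real.exp (-1) := Real.exp_pos _
  have hP : (0 : ℝ) < (1 + b) ^ (m + 1) := by positivity
  have hkey2 : ((m + 1).factorial : ℝ) < lam * (2 * Real.exp (-1)) := by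
    have h1 : Real.exp 1 < 2 * ((m : ℝ) + 2) := by
      have h4 : (4 : ℝ) ≤ 2 * ((m : ℝ) + 2) := by
        have : (0 : ℝ) ≤ (m : ℝ) := Nat.cast_nonneg m
        linarith
      calc Real.exp 1 < 2.7182818286 := Real.exp_one_lt_d9
        _ ≤ 4 := by norm_num
        _ ≤ _ := h4
    have hee : Real.exp (-1) * Real.exp 1 = 1 := by rw [← Real.exp_add]; norm_num
    have h2 : (1 : ℝ) < 2 * ((m : ℝ) + 2) * Real.exp (-1) := by
      nlinarith [mul_lt_mul_of_pos_left h1 hE]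
    have hfc : ((m + 2).factorial : ℝ) = ((m : ℝ) + 2) * ((m + 1).factorial : ℝ) := by
      rw [Nat.factorial_succ]; push_cast; ring
    have h3 : ((m + 1).factorial : ℝ) < ((m + 2).factorial : ℝ) * (2 * Real.exp (-1)) := by
      rw [hfc]
      nlinarith [mul_lt_mul_of_pos_left h2 hfpos]
    have h4 : ((m + 2).factorial : ℝ) * (2 * Real.exp (-1)) ≤ lam * (2 * Real.exp (-1)) :=
      mul_le_mul_of_nonneg_right hfact (by positivity)
    linarith
  have hfinal : ((m + 1).factorial : ℝ) * (1 + b) ^ (m + 1) < lam * ∫ z in Set.Ioi a, f2 z := by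
    calc ((m + 1).factorial : ℝ) * (1 + b) ^ (m + 1)
        < (lam * (2 * Real.exp (-1))) * (1 + b) ^ (m + 1) :=
          mul_lt_mul_of_pos_right hkey2 hP
      _ = lam * ((1 + b) ^ (m + 1) * (2 * Real.exp (-1))) := by ring
      _ ≤ lam * ∫ z in Set.Ioi a, f2 z := mul_le_mul_of_nonneg_left hI2ge hlampos.le
  linarith
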